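/- Let p be a prime, q = p^e, m ≥ 1, and let G = (g_{ij}), 1 ≤ i ≤ k, 1 ≤ j ≤ n, be a matrix over 𝔽_{q^m}. For α = (α_1,…,α_k) ∈ 𝔽_{q^m}^k let c(α) = ( Tr_{q^m/q}( ∑_{i=1}^k α_i g_{ij} ) )_{1 ≤ j ≤ n} ∈ 𝔽_q^n. Then the Hamming weight of c(α), viewed as an element of ℚ_p(ξ_{p(q^m−1)}), satisfies wt(c(α)) = −((q−1)/q) ∑_{r ∈ R} ( ∏_{i=1}^k λ_{r_i} ) ( ∑_{j=1}^n ∏_{i=1}^k T(g_{ij})^{r_i} ) ( ∏_{i=1}^k T(α_i)^{r_i} ), where R = { r = (r_1,…,r_k) ∈ [0, q^m−1]^k : r_1+⋯+r_k ≡ 0 (mod q−1) and r_1+⋯+r_k > 0 }. -/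

import Mathlib

open Finset


lemma aux_geom_ne {K : Type*} [Field K] {N : ℕ} {ζ : K} (hζ : ζ ^ N = 1) (h : ζ ≠ 1) :
    ∑ i ∈ Finset.range N, ζ ^ i = 0 := by
  have h2 := geom_sum_mul ζ N
  rw [hζ, sub_self] at h2
  rcases mul_eq_zero.mp h2 with h3 | h3
  · exact h3
  · exact absurd (sub_eq_zero.mp h3) h

section Tfacts
variable {K : Type*} [Field K] {Fm : Type} [Field Fm]
  {T : Fm → K} (hT0 : T 0 = 0) (hTmul : ∀ x y, T (x * y) = T x * T y)
  (hTinj : Function.Injective T)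

include hT0 hTinj in
lemma aux_Tne {x : Fm} (hx : x ≠ 0) : T x ≠ 0 := fun h => hx (hTinj (h.trans hT0.symm))

include hT0 hTmul hTinj in
lemma aux_Tone : T 1 = 1 := by
  have h1 : T 1 * T 1 = T 1 * 1 := by rw [← hTmul, one_mul, mul_one]
  exact mul_left_cancel₀ (aux_Tne hT0 hTinj one_ne_zero) h1

include hT0 hTmul hTinj in
lemma aux_Tpow (x : Fm) (s : ℕ) : T (x ^ s) = T x ^ s := by
  induction s with
  | zero => simpa using aux_Tone hT0 hTmul hTinj
  | succ s ih => rw [pow_succ, pow_succ, hTmul, ih]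
end Tfacts

lemma aux_pow_mod {K : Type*} [Field K] {p : ℕ} {ξp : K} (hp : ξp ^ p = 1) (x : ℕ) :
    ξp ^ x = ξp ^ (x % p) := by
  conv_lhs => rw [← Nat.mod_add_div x p, pow_add, pow_mul, hp, one_pow, mul_one]

lemma aux_chi_add {K : Type*} [Field K] {p : ℕ} [Fact p.Prime] {ξp : K}
    (hξ : IsPrimitiveRoot ξp p) (a b : ZMod p) :
    ξp ^ (a + b).val = ξp ^ a.val * ξp ^ b.val := by
  rw [← pow_add, ZMod.val_add, ← aux_pow_mod hξ.pow_eq_one]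

lemma aux_char_sum_zero {K : Type*} [Field K] {p : ℕ} [Fact p.Prime] {ξp : K}
    (hξ : IsPrimitiveRoot ξp p) (F : Type) [Field F] [Fintype F] [Algebra (ZMod p) F] :
    ∑ z : F, ξp ^ ((Algebra.trace (ZMod p) F z).val) = 0 := by
  obtain ⟨z0, hz0⟩ := Algebra.trace_surjective (ZMod p) F 1
  have hne : ξp ^ ((1 : ZMod p)).val ≠ 1 := by
    rw [ZMod.val_one _]
    exact hξ.pow_ne_one_of_pos_of_lt one_ne_zero (Fact.out : p.Prime).one_lt
  set S := ∑ z : F, ξp ^ ((Algebra.trace (ZMod p) F z).val) with hS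
  have hshift : S * ξp ^ ((1 : ZMod p)).val = S := by
    rw [hS, Finset.sum_mul]
    refine Fintype.sum_equiv (Equiv.addRight z0) _ _ (fun z => ?_)
    simp only [Equiv.coe_addRight]
    rw [map_add, aux_chi_add hξ, hz0]
  have hz : S * (ξp ^ ((1 : ZMod p)).val - 1) = 0 := by linear_combination hshift
  rcases mul_eq_zero.mp hz with h | h
  · exact h
  · exact absurd (sub_eq_zero.mp h) hne

lemma aux_fourier {K : Type*} [Field K] {p Q : ℕ} [Fact p.Prime] {ξp : K}
    (hξ : IsPrimitiveRoot ξp p)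
    (Fqm : Type) [Field Fqm] [Fintype Fqm] [DecidableEq Fqm] [Algebra (ZMod p) Fqm]
    (hcard : Fintype.card Fqm = Q) (hQ : 2 ≤ Q)
    (hKQ : ((Q - 1 : ℕ) : K) ≠ 0)
    (T : Fqm → K) (hT0 : T 0 = 0) (hTmul : ∀ x y, T (x * y) = T x * T y)
    (hTq : ∀ x, T x ^ Q = T x) (hTinj : Function.Injective T)
    (g lam : ℕ → K)
    (hg : ∀ i, g i = ∑ x ∈ (Finset.univ \ {0} : Finset Fqm),
        ξp ^ (Algebra.trace (ZMod p) Fqm x).val * (T x)⁻¹ ^ i)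
    (hlam : ∀ i, lam i = if i = 0 then 1 else if i = Q - 1
        then -((Q : ℕ) : K) * (((Q - 1 : ℕ) : K))⁻¹ else g i * (((Q - 1 : ℕ) : K))⁻¹)
    (x : Fqm) :
    ξp ^ ((Algebra.trace (ZMod p) Fqm x).val) = ∑ i ∈ Finset.range Q, lam i * T x ^ i := by
  have hQ1 : 0 < Q - 1 := by omega
  have hTQ1 : ∀ z : Fqm, z ≠ 0 → T z ^ (Q - 1) = 1 := by
    intro z hz
    have h := hTq z
    have hQ' : Q - 1 + 1 = Q := by omega
    rw [← hQ', pow_succ] at h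
    have := mul_right_cancel₀ (aux_Tne hT0 hTinj hz) (h.trans (one_mul (T z)).symm)
    exact this
  by_cases hx : x = 0
  · subst hx
    rw [map_zero, ZMod.val_zero, pow_zero]
    rw [Finset.sum_eq_single_of_mem 0 (Finset.mem_range.mpr (by omega))
      (fun b _ hb => by rw [hT0, zero_pow hb, mul_zero])]
    rw [hlam 0, if_pos rfl, pow_zero, mul_one]
  · -- notation
    set E : Fqm → K := fun z => ξp ^ ((Algebra.trace (ZMod p) Fqm z).val) with hE
    have hE0 : E 0 = 1 := by rw [hE]; simp
    have hsum0 : ∑ z ∈ (Finset.univ \ {0} : Finset Fqm), E z = -1 := by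
      have h := aux_char_sum_zero hξ Fqm
      have h2 : ∑ z ∈ (Finset.univ \ {0} : Finset Fqm), E z + ∑ z ∈ ({0} : Finset Fqm), E z
          = ∑ z : Fqm, E z := Finset.sum_sdiff (Finset.subset_univ _)
      rw [Finset.sum_singleton, hE0] at h2
      have h' : ∑ z : Fqm, E z = 0 := h
      linear_combination h2 + h'
    have hset : Finset.range Q = insert 0 (insert (Q - 1) (Finset.Ioo 0 (Q - 1))) := by
      ext a
      simp only [Finset.mem_range, Finset.mem_insert, Finset.mem_Ioo]
      omega
    rw [hset, Finset.sum_insert (by simp only [Finset.mem_insert, Finset.mem_Ioo]; omega),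
      Finset.sum_insert (by simp only [Finset.mem_Ioo]; omega)]
    have hmid : ∑ i ∈ Finset.Ioo 0 (Q - 1), lam i * T x ^ i
        = (((Q - 1 : ℕ) : K))⁻¹ * (((Q - 1 : ℕ) : K) * E x + 1) := by
      have h1 : ∀ i ∈ Finset.Ioo 0 (Q - 1), lam i * T x ^ i
          = (((Q - 1 : ℕ) : K))⁻¹
            * ∑ z ∈ (Finset.univ \ {0} : Finset Fqm), E z * ((T z)⁻¹ * T x) ^ i := by
        intro i hi
        obtain ⟨hi0, hi1⟩ := Finset.mem_Ioo.mp hi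
        rw [hlam i, if_neg (by omega), if_neg (by omega), hg i]
        rw [mul_comm _ ((((Q - 1 : ℕ) : K))⁻¹), mul_assoc, Finset.sum_mul]
        congr 1
        refine Finset.sum_congr rfl fun z _ => ?_
        rw [mul_assoc, ← mul_pow]
      rw [Finset.sum_congr rfl h1, ← Finset.mul_sum, Finset.sum_comm]
      congr 1
      have h2 : ∀ z ∈ (Finset.univ \ {0} : Finset Fqm),
          ∑ i ∈ Finset.Ioo 0 (Q - 1), E z * ((T z)⁻¹ * T x) ^ i
          = E z * ((if z = x then ((Q - 1 : ℕ) : K) else 0) - 1) := by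
        intro z hz
        have hz0 : z ≠ 0 := by simpa using (Finset.mem_sdiff.mp hz).2
        rw [← Finset.mul_sum]
        congr 1
        have hIoo : Finset.Ioo 0 (Q - 1) = Finset.range (Q - 1) \ {0} := by
          ext a; simp only [Finset.mem_Ioo, Finset.mem_sdiff, Finset.mem_range,
            Finset.mem_singleton]; omega
        have hsplit : ∑ i ∈ Finset.range (Q - 1) \ {0}, ((T z)⁻¹ * T x) ^ i
            + ∑ i ∈ ({0} : Finset ℕ), ((T z)⁻¹ * T x) ^ i
            = ∑ i ∈ Finset.range (Q - 1), ((T z)⁻¹ * T x) ^ i :=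
          Finset.sum_sdiff (by simp [Finset.singleton_subset_iff, Finset.mem_range]; omega)
        rw [hIoo]
        rw [Finset.sum_singleton, pow_zero] at hsplit
        have hζ : ((T z)⁻¹ * T x) ^ (Q - 1) = 1 := by
          rw [mul_pow, inv_pow, hTQ1 z hz0, hTQ1 x hx, inv_one, mul_one]
        by_cases hzx : z = x
        · subst hzx
          rw [if_pos rfl]
          have h1 : (T z)⁻¹ * T z = 1 := inv_mul_cancel₀ (aux_Tne hT0 hTinj hz0)
          have hr : ∑ i ∈ Finset.range (Q - 1), ((T z)⁻¹ * T z) ^ i = ((Q - 1 : ℕ) : K) := by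
            rw [h1]
            simp only [one_pow, Finset.sum_const, Finset.card_range, nsmul_eq_mul, mul_one]
          linear_combination hsplit + hr
        · rw [if_neg hzx]
          have hne1 : (T z)⁻¹ * T x ≠ 1 := fun h =>
            hzx (hTinj ((inv_mul_eq_one₀ (aux_Tne hT0 hTinj hz0)).mp h))
          have hgz := aux_geom_ne hζ hne1
          linear_combination hsplit + hgz
      rw [Finset.sum_congr rfl h2]
      have h3 : ∑ z ∈ (Finset.univ \ {0} : Finset Fqm),
          E z * ((if z = x then ((Q - 1 : ℕ) : K) else 0) - 1)
          = (∑ z ∈ (Finset.univ \ {0} : Finset Fqm),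
              E z * (if z = x then ((Q - 1 : ℕ) : K) else 0))
            - ∑ z ∈ (Finset.univ \ {0} : Finset Fqm), E z := by
        rw [← Finset.sum_sub_distrib]
        exact Finset.sum_congr rfl fun z _ => by ring
      rw [h3, hsum0]
      have h4 : ∑ z ∈ (Finset.univ \ {0} : Finset Fqm),
          E z * (if z = x then ((Q - 1 : ℕ) : K) else 0) = E x * ((Q - 1 : ℕ) : K) := by
        rw [Finset.sum_eq_single_of_mem x (by simp [hx])
          (fun b _ hb => by rw [if_neg hb, mul_zero])]
        rw [if_pos rfl]
      rw [h4]; ring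
    rw [hmid, hlam 0, if_pos rfl, hlam (Q - 1), if_neg (by omega), if_pos rfl,
      hTQ1 x hx, pow_zero]
    have hc : ((Q - 1 : ℕ) : K) * (((Q - 1 : ℕ) : K))⁻¹ = 1 := mul_inv_cancel₀ hKQ
    have hQcast : ((Q : ℕ) : K) = ((Q - 1 : ℕ) : K) + 1 := by
      have h5 : Q - 1 + 1 = Q := by omega
      rw [← h5]; push_cast; ring
    show E x = _
    linear_combination (1 - E x) * hc + (((Q - 1 : ℕ) : K))⁻¹ * hQcast

lemma aux_chi_sum {K : Type*} [Field K] {p : ℕ} [Fact p.Prime] {ξp : K}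
    (hξ : IsPrimitiveRoot ξp p) {ι : Type*} (s : Finset ι) (f : ι → ZMod p) :
    ξp ^ (∑ i ∈ s, f i).val = ∏ i ∈ s, ξp ^ (f i).val := by
  classical
  induction s using Finset.cons_induction with
  | empty => simp [ZMod.val_zero]
  | cons a s ha ih =>
    rw [Finset.sum_cons, Finset.prod_cons, aux_chi_add hξ, ih]


lemma aux_sum_units {F : Type} [Field F] [Fintype F] [DecidableEq F] {M : Type*}
    [AddCommMonoid M] (f : F → M) :
    ∑ y ∈ (Finset.univ \ {0} : Finset F), f y = ∑ y : Fˣ, f y := by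
  have himg : (Finset.univ : Finset Fˣ).image (Units.val) = Finset.univ \ {0} := by
    ext b
    simp only [Finset.mem_image, Finset.mem_univ, true_and, Finset.mem_sdiff,
      Finset.mem_singleton]
    constructor
    · rintro ⟨u, rfl⟩; exact u.ne_zero
    · intro hb; exact ⟨Units.mk0 b hb, rfl⟩
  rw [← himg, Finset.sum_image (fun a _ b _ h => Units.ext h)]

lemma aux_unit_sum {K : Type*} [Field K] (Fq Fqm : Type) [Field Fq] [Field Fqm] [Fintype Fq]
    [DecidableEq Fq] [Algebra Fq Fqm]
    (T : Fqm → K) (hT0 : T 0 = 0) (hTmul : ∀ x y, T (x * y) = T x * T y)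
    (hTinj : Function.Injective T) (s : ℕ) :
    ∑ y ∈ (Finset.univ \ {0} : Finset Fq), T (algebraMap Fq Fqm y) ^ s
      = if (Fintype.card Fq - 1) ∣ s then ((Fintype.card Fq - 1 : ℕ) : K) else 0 := by
  have hψ : ∀ y : Fq, T (algebraMap Fq Fqm y) ^ s = T (algebraMap Fq Fqm (y ^ s)) := by
    intro y; rw [map_pow, aux_Tpow hT0 hTmul hTinj]
  split_ifs with hdvd
  · obtain ⟨c, rfl⟩ := hdvd
    have hcongr : ∀ y ∈ (Finset.univ \ {0} : Finset Fq),
        T (algebraMap Fq Fqm y) ^ ((Fintype.card Fq - 1) * c) = 1 := by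
      intro y hy
      have hy0 : y ≠ 0 := by simpa using (Finset.mem_sdiff.mp hy).2
      rw [hψ, pow_mul, FiniteField.pow_card_sub_one_eq_one y hy0, one_pow, map_one,
        aux_Tone hT0 hTmul hTinj]
    rw [Finset.sum_congr rfl hcongr, Finset.sum_const, nsmul_eq_mul, mul_one]
    congr 1
    rw [Finset.card_sdiff_of_subset (by simp), Finset.card_singleton, Finset.card_univ]
  · obtain ⟨u, hu⟩ := IsCyclic.exists_generator (α := Fqˣ)
    have horder : orderOf u = Fintype.card Fq - 1 := by
      rw [orderOf_eq_card_of_forall_mem_zpowers hu, Nat.card_eq_fintype_card, Fintype.card_units]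
    have hune : T (algebraMap Fq Fqm (u : Fq)) ^ s ≠ 1 := by
      intro h
      rw [hψ] at h
      have h1 : algebraMap Fq Fqm ((u : Fq) ^ s) = algebraMap Fq Fqm 1 := by
        apply hTinj
        rw [h, map_one, aux_Tone hT0 hTmul hTinj]
      have h2 : (u : Fq) ^ s = 1 := (algebraMap Fq Fqm).injective h1
      have h3 : u ^ s = 1 := by
        ext; rw [Units.val_pow_eq_pow_val, h2, Units.val_one]
      exact hdvd (horder ▸ orderOf_dvd_of_pow_eq_one h3)
    rw [aux_sum_units]
    set A := ∑ y : Fqˣ, T (algebraMap Fq Fqm (y : Fq)) ^ s with hA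
    have hshift : A * T (algebraMap Fq Fqm (u : Fq)) ^ s = A := by
      rw [hA, Finset.sum_mul]
      refine Fintype.sum_equiv (Equiv.mulRight u) _ _ (fun y => ?_)
      simp only [Equiv.coe_mulRight]
      rw [Units.val_mul, map_mul, hTmul, mul_pow]
    have hz : A * (T (algebraMap Fq Fqm (u : Fq)) ^ s - 1) = 0 := by linear_combination hshift
    rcases mul_eq_zero.mp hz with h | h
    · exact h
    · exact absurd (sub_eq_zero.mp h) hune

lemma aux_step1 {K : Type*} [Field K] {p : ℕ} [Fact p.Prime] {ξp : K}
    (hξ : IsPrimitiveRoot ξp p)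
    (Fq Fqm : Type) [Field Fq] [Field Fqm] [Fintype Fq] [Fintype Fqm] [DecidableEq Fq]
    [Algebra (ZMod p) Fq] [Algebra (ZMod p) Fqm] [Algebra Fq Fqm]
    [IsScalarTower (ZMod p) Fq Fqm] (s : Fqm)
    (hchar : ∑ z : Fq, ξp ^ ((Algebra.trace (ZMod p) Fq z).val) = 0) :
    ∑ y : Fq, ξp ^ ((Algebra.trace (ZMod p) Fqm (algebraMap Fq Fqm y * s)).val)
      = if Algebra.trace Fq Fqm s = 0 then ((Fintype.card Fq : ℕ) : K) else 0 := by
  have hterm : ∀ y : Fq, (Algebra.trace (ZMod p) Fqm (algebraMap Fq Fqm y * s))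
      = Algebra.trace (ZMod p) Fq (y * Algebra.trace Fq Fqm s) := by
    intro y
    rw [← Algebra.trace_trace (S := Fq)]
    congr 1
    rw [← Algebra.smul_def, map_smul, smul_eq_mul]
  rw [Finset.sum_congr rfl (fun y _ => by rw [hterm y])]
  split_ifs with ht
  · rw [Finset.sum_congr rfl (fun y _ => by rw [ht, mul_zero, map_zero, ZMod.val_zero,
      pow_zero]), Finset.sum_const, Finset.card_univ, nsmul_eq_mul, mul_one]
  · calc ∑ y : Fq, ξp ^ ((Algebra.trace (ZMod p) Fq (y * Algebra.trace Fq Fqm s)).val)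
        = ∑ u : Fq, ξp ^ ((Algebra.trace (ZMod p) Fq u).val) :=
          Fintype.sum_equiv (Equiv.mulRight₀ _ ht) _ _ (fun y => rfl)
      _ = 0 := hchar


noncomputable abbrev auxK (p e m : ℕ) [Fact p.Prime] (hpos : 0 < p * ((p ^ e) ^ m - 1)) : Type :=
  CyclotomicField (p * ((p ^ e) ^ m - 1)) ℚ_[p]

set_option maxHeartbeats 1000000 in
/-- **weight polarization formula.**  Let `p` be a prime, `q = p^e`,
`m ≥ 1`, and let `G = (g_{ij})` be a `k × n` matrix over `𝔽_{q^m}`.  For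
`α ∈ 𝔽_{q^m}^k` let `c(α)_j = Tr_{q^m/q}(∑_i α_i g_{ij})`.  Then, inside
`ℚ_p(ξ_{p(q^m−1)})`,
`wt(c(α)) = −((q−1)/q) ∑_{r ∈ R} (∏_i λ_{r_i}) (∑_j ∏_i T(g_{ij})^{r_i}) (∏_i T(α_i)^{r_i})`,
where `R = {r ∈ [0,q^m−1]^k : ∑ r_i ≡ 0 (mod q−1), ∑ r_i > 0}` and the `λ_i` are
the Gauss-sum coefficients `λ_0 = 1`, `λ_i = g(T^{−i})/(q^m−1)` for
`1 ≤ i ≤ q^m−2`, `λ_{q^m−1} = −q^m/(q^m−1)`.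

Here `ℚ_p(ξ_{p(q^m−1)})` is realized as `CyclotomicField (p(q^m−1)) ℚ_[p]`, `ξ_p`
is a primitive `p`-th root of unity therein, and the Teichmüller lift `T` is
axiomatized by the hypotheses `hT*`. -/
theorem stmt_12 (p e m k n : ℕ) [Fact p.Prime] (he : 1 ≤ e) (hm : 1 ≤ m)
    (hpos : 0 < p * ((p ^ e) ^ m - 1))
    (Fq Fqm : Type) [Field Fq] [Field Fqm] [Fintype Fq] [Fintype Fqm]
    [DecidableEq Fq] [DecidableEq Fqm]
    [Algebra (ZMod p) Fq] [Algebra (ZMod p) Fqm] [Algebra Fq Fqm]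
    [IsScalarTower (ZMod p) Fq Fqm]
    (hq : Fintype.card Fq = p ^ e) (hqm : Fintype.card Fqm = (p ^ e) ^ m)
    (ξp : CyclotomicField (p * ((p ^ e) ^ m - 1)) ℚ_[p])
    (hξp : IsPrimitiveRoot ξp p)
    (T : Fqm → CyclotomicField (p * ((p ^ e) ^ m - 1)) ℚ_[p])
    (hT0 : T 0 = 0)
    (hTmul : ∀ x y, T (x * y) = T x * T y)
    (hTq : ∀ x, T x ^ ((p ^ e) ^ m) = T x)
    (hTinj : Function.Injective T)
    (g : ℕ → CyclotomicField (p * ((p ^ e) ^ m - 1)) ℚ_[p])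
    (hg : ∀ i, g i = ∑ x ∈ (Finset.univ \ {0} : Finset Fqm),
        ξp ^ (Algebra.trace (ZMod p) Fqm x).val * (T x)⁻¹ ^ i)
    (lam : ℕ → CyclotomicField (p * ((p ^ e) ^ m - 1)) ℚ_[p])
    (hlam : ∀ i, lam i = if i = 0 then 1 else if i = (p ^ e) ^ m - 1
        then -(((p ^ e) ^ m : ℕ) : CyclotomicField (p * ((p ^ e) ^ m - 1)) ℚ_[p])
          * ((((p ^ e) ^ m - 1 : ℕ) : CyclotomicField (p * ((p ^ e) ^ m - 1)) ℚ_[p]))⁻¹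
        else g i * ((((p ^ e) ^ m - 1 : ℕ) : CyclotomicField (p * ((p ^ e) ^ m - 1)) ℚ_[p]))⁻¹)
    (G : Matrix (Fin k) (Fin n) Fqm) :
    ∀ α : Fin k → Fqm,
      (((Finset.univ.filter fun j : Fin n =>
            Algebra.trace Fq Fqm (∑ i, α i * G i j) ≠ 0).card : ℕ)
          : CyclotomicField (p * ((p ^ e) ^ m - 1)) ℚ_[p])
        = -((((p ^ e - 1 : ℕ) : CyclotomicField (p * ((p ^ e) ^ m - 1)) ℚ_[p]))
              * (((p ^ e : ℕ) : CyclotomicField (p * ((p ^ e) ^ m - 1)) ℚ_[p]))⁻¹)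
          * ∑ r ∈ (Fintype.piFinset fun _ : Fin k => Finset.range ((p ^ e) ^ m)).filter
              (fun r => (p ^ e - 1) ∣ (∑ i, r i) ∧ 0 < ∑ i, r i),
              (∏ i, lam (r i)) * (∑ j, ∏ i, T (G i j) ^ (r i)) * (∏ i, T (α i) ^ (r i)) := by
  intro α
  haveI : CharZero (CyclotomicField (p * ((p ^ e) ^ m - 1)) ℚ_[p]) :=
    charZero_of_injective_algebraMap
      (algebraMap ℚ_[p] (CyclotomicField (p * ((p ^ e) ^ m - 1)) ℚ_[p])).injective
  have hp2 : 2 ≤ p := (Fact.out : p.Prime).two_le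
  have hq2 : 2 ≤ p ^ e := by
    calc 2 = 2 ^ 1 := rfl
    _ ≤ p ^ e := Nat.pow_le_pow_left hp2 1 |>.trans (Nat.pow_le_pow_right (by omega) he)
  have hQ2 : 2 ≤ (p ^ e) ^ m := by
    calc 2 ≤ p ^ e := hq2
    _ = (p ^ e) ^ 1 := (pow_one _).symm
    _ ≤ (p ^ e) ^ m := Nat.pow_le_pow_right (by omega) hm
  have hqK : ((p ^ e : ℕ) : (auxK p e m hpos)) ≠ 0 := Nat.cast_ne_zero.mpr (by omega)
  have hKQ : (((p ^ e) ^ m - 1 : ℕ) : (auxK p e m hpos)) ≠ 0 := Nat.cast_ne_zero.mpr (by omega)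
  have hfourier := aux_fourier hξp Fqm hqm hQ2 hKQ T hT0 hTmul hTq hTinj g lam hg hlam
  -- the `w` function for sums of T (ι y) ^ S over all y
  have e3 : ∀ S : ℕ, ∑ y : Fq, T (algebraMap Fq Fqm y) ^ S
      = (if S = 0 then (1 : (auxK p e m hpos)) else 0)
        + (if (p ^ e - 1) ∣ S then ((p ^ e - 1 : ℕ) : (auxK p e m hpos)) else 0) := by
    intro S
    rw [Finset.sum_eq_sum_sdiff_singleton_add (Finset.mem_univ (0 : Fq))]
    rw [aux_unit_sum Fq Fqm T hT0 hTmul hTinj S, hq, map_zero, hT0, zero_pow_eq]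
    split_ifs <;> ring
  -- the per-j key identity
  have key : ∀ j : Fin n,
      (if Algebra.trace Fq Fqm (∑ i, α i * G i j) = 0 then ((p ^ e : ℕ) : (auxK p e m hpos)) else 0)
      = ((p ^ e : ℕ) : (auxK p e m hpos)) + ((p ^ e - 1 : ℕ) : (auxK p e m hpos)) *
          ∑ r ∈ (Fintype.piFinset fun _ : Fin k => Finset.range ((p ^ e) ^ m)).filter
              (fun r => (p ^ e - 1) ∣ (∑ i, r i) ∧ 0 < ∑ i, r i),
            (∏ i, lam (r i)) * (∏ i, T (G i j) ^ (r i)) * (∏ i, T (α i) ^ (r i)) := by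
    intro j
    have e1 : (if Algebra.trace Fq Fqm (∑ i, α i * G i j) = 0 then ((p ^ e : ℕ) : (auxK p e m hpos)) else 0)
        = ∑ y : Fq, ξp ^ ((Algebra.trace (ZMod p) Fqm
            (algebraMap Fq Fqm y * (∑ i, α i * G i j))).val) := by
      rw [aux_step1 hξp Fq Fqm _ (aux_char_sum_zero hξp Fq), hq]
    rw [e1]
    have e2 : ∀ y : Fq,
        ξp ^ ((Algebra.trace (ZMod p) Fqm (algebraMap Fq Fqm y * (∑ i, α i * G i j))).val)
        = ∑ r ∈ Fintype.piFinset (fun _ : Fin k => Finset.range ((p ^ e) ^ m)),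
            ((∏ i, lam (r i)) * (∏ i, T (G i j) ^ (r i)) * (∏ i, T (α i) ^ (r i)))
              * T (algebraMap Fq Fqm y) ^ (∑ i, r i) := by
      intro y
      have h1 : algebraMap Fq Fqm y * (∑ i, α i * G i j)
          = ∑ i, algebraMap Fq Fqm y * α i * G i j := by
        rw [Finset.mul_sum]
        exact Finset.sum_congr rfl fun i _ => (mul_assoc _ _ _).symm
      rw [h1, map_sum, aux_chi_sum hξp]
      have h2 : ∀ i : Fin k,
          ξp ^ ((Algebra.trace (ZMod p) Fqm (algebraMap Fq Fqm y * α i * G i j)).val)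
          = ∑ ri ∈ Finset.range ((p ^ e) ^ m),
              lam ri * (T (algebraMap Fq Fqm y) * T (α i) * T (G i j)) ^ ri := by
        intro i
        rw [hfourier (algebraMap Fq Fqm y * α i * G i j)]
        exact Finset.sum_congr rfl fun ri _ => by rw [hTmul, hTmul]
      rw [Finset.prod_congr rfl (fun i _ => h2 i), Finset.prod_univ_sum]
      refine Finset.sum_congr rfl fun r _ => ?_
      simp only [mul_pow, Finset.prod_mul_distrib, Finset.prod_pow_eq_pow_sum]
      ring
    rw [Finset.sum_congr rfl (fun y _ => e2 y), Finset.sum_comm]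
    rw [Finset.sum_congr rfl (fun r _ => by rw [← Finset.mul_sum, e3 (∑ i, r i)])]
    simp only [mul_add]
    rw [Finset.sum_add_distrib]
    -- first piece
    have hfirst : ∑ r ∈ Fintype.piFinset (fun _ : Fin k => Finset.range ((p ^ e) ^ m)),
        ((∏ i, lam (r i)) * (∏ i, T (G i j) ^ (r i)) * (∏ i, T (α i) ^ (r i)))
          * (if (∑ i, r i) = 0 then (1 : (auxK p e m hpos)) else 0) = 1 := by
      simp only [mul_ite, mul_one, mul_zero]
      rw [← Finset.sum_filter]
      have hfe : (Fintype.piFinset (fun _ : Fin k => Finset.range ((p ^ e) ^ m))).filter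
          (fun r => (∑ i, r i) = 0) = {fun _ => 0} := by
        ext r
        constructor
        · intro hr
          obtain ⟨hmem, h0⟩ := Finset.mem_filter.mp hr
          rw [Finset.mem_singleton]
          funext i
          exact (Finset.sum_eq_zero_iff.mp h0) i (Finset.mem_univ i)
        · intro hr
          rw [Finset.mem_singleton] at hr
          subst hr
          refine Finset.mem_filter.mpr ⟨Fintype.mem_piFinset.mpr fun i =>
            Finset.mem_range.mpr (by omega), by simp⟩
      rw [hfe, Finset.sum_singleton]
      simp [hlam 0]
    -- second piece
    have hsecond : ∑ r ∈ Fintype.piFinset (fun _ : Fin k => Finset.range ((p ^ e) ^ m)),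
        ((∏ i, lam (r i)) * (∏ i, T (G i j) ^ (r i)) * (∏ i, T (α i) ^ (r i)))
          * (if (p ^ e - 1) ∣ (∑ i, r i) then ((p ^ e - 1 : ℕ) : (auxK p e m hpos)) else 0)
        = ((p ^ e - 1 : ℕ) : (auxK p e m hpos)) * (1 +
            ∑ r ∈ (Fintype.piFinset fun _ : Fin k => Finset.range ((p ^ e) ^ m)).filter
              (fun r => (p ^ e - 1) ∣ (∑ i, r i) ∧ 0 < ∑ i, r i),
            (∏ i, lam (r i)) * (∏ i, T (G i j) ^ (r i)) * (∏ i, T (α i) ^ (r i))) := by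
      simp only [mul_ite, mul_zero]
      rw [← Finset.sum_filter]
      have hfe2 : (Fintype.piFinset (fun _ : Fin k => Finset.range ((p ^ e) ^ m))).filter
          (fun r => (p ^ e - 1) ∣ (∑ i, r i))
          = insert (fun _ => 0)
            ((Fintype.piFinset fun _ : Fin k => Finset.range ((p ^ e) ^ m)).filter
              (fun r => (p ^ e - 1) ∣ (∑ i, r i) ∧ 0 < ∑ i, r i)) := by
        ext r
        constructor
        · intro hr
          obtain ⟨hmem, hdvd⟩ := Finset.mem_filter.mp hr
          rcases Nat.eq_zero_or_pos (∑ i, r i) with h0 | h0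
          · refine Finset.mem_insert.mpr (Or.inl ?_)
            funext i
            exact (Finset.sum_eq_zero_iff.mp h0) i (Finset.mem_univ i)
          · exact Finset.mem_insert.mpr (Or.inr (Finset.mem_filter.mpr ⟨hmem, hdvd, h0⟩))
        · intro hr
          rcases Finset.mem_insert.mp hr with h | h
          · subst h
            refine Finset.mem_filter.mpr ⟨Fintype.mem_piFinset.mpr fun i =>
              Finset.mem_range.mpr (by omega), ?_⟩
            have h4 : (∑ i : Fin k, (0 : ℕ)) = 0 := Finset.sum_const_zero
            simp only [h4]
            exact dvd_zero _
          · obtain ⟨hmem, hdvd, h0⟩ := Finset.mem_filter.mp h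
            exact Finset.mem_filter.mpr ⟨hmem, hdvd⟩
      rw [hfe2, Finset.sum_insert (by
        simp only [Finset.mem_filter, not_and]
        intro _ _
        simp)]
      rw [mul_add, mul_one, Finset.mul_sum]
      congr 1
      · simp [hlam 0]
      · exact Finset.sum_congr rfl fun r _ => by ring
    rw [hfirst, hsecond]
    have hcast : ((p ^ e : ℕ) : (auxK p e m hpos)) = ((p ^ e - 1 : ℕ) : (auxK p e m hpos)) + 1 := by
      rw [Nat.cast_sub (by omega : 1 ≤ p ^ e)]; push_cast; ring
    rw [hcast]; ring
  -- final assembly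
  have hW : (((Finset.univ.filter fun j : Fin n =>
        Algebra.trace Fq Fqm (∑ i, α i * G i j) ≠ 0).card : ℕ) : (auxK p e m hpos))
      = ∑ j : Fin n, (if Algebra.trace Fq Fqm (∑ i, α i * G i j) = 0 then (0 : (auxK p e m hpos)) else 1) := by
    rw [Finset.card_filter]
    push_cast
    exact Finset.sum_congr rfl fun j _ => by
      by_cases h : Algebra.trace Fq Fqm (∑ i, α i * G i j) = 0 <;> simp [h]
  rw [hW]
  have hj : ∀ j : Fin n,
      (if Algebra.trace Fq Fqm (∑ i, α i * G i j) = 0 then (0 : (auxK p e m hpos)) else 1)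
      = -(((p ^ e - 1 : ℕ) : (auxK p e m hpos)) * (((p ^ e : ℕ) : (auxK p e m hpos)))⁻¹) *
          ∑ r ∈ (Fintype.piFinset fun _ : Fin k => Finset.range ((p ^ e) ^ m)).filter
              (fun r => (p ^ e - 1) ∣ (∑ i, r i) ∧ 0 < ∑ i, r i),
            (∏ i, lam (r i)) * (∏ i, T (G i j) ^ (r i)) * (∏ i, T (α i) ^ (r i)) := by
    intro j
    have h1 : (if Algebra.trace Fq Fqm (∑ i, α i * G i j) = 0 then (0 : (auxK p e m hpos)) else 1)
        = 1 - (((p ^ e : ℕ) : (auxK p e m hpos)))⁻¹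
            * (if Algebra.trace Fq Fqm (∑ i, α i * G i j) = 0 then ((p ^ e : ℕ) : (auxK p e m hpos)) else 0) := by
      split_ifs with h
      · rw [inv_mul_cancel₀ hqK]; ring
      · ring
    rw [h1, key j]
    have hinv : (((p ^ e : ℕ) : (auxK p e m hpos)))⁻¹ * ((p ^ e : ℕ) : (auxK p e m hpos)) = 1 := inv_mul_cancel₀ hqK
    linear_combination -hinv
  rw [Finset.sum_congr rfl (fun j _ => hj j), ← Finset.mul_sum, Finset.sum_comm]
  congr 1
  refine Finset.sum_congr rfl fun r _ => ?_
  rw [← Finset.sum_mul, ← Finset.mul_sum]
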